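/- Let Q be a convex quadrilateral that is not a midpoint diagonal quadrilateral. Then no ellipse inscribed in Q has a pair of conjugate diameters parallel to the two diagonals of Q. -/

import Mathlib

/-- Convex quadrilateral with vertices in cyclic order: no three consecutive
vertices collinear and the diagonals cross. -/
def ConvexQuad (A₁ A₂ A₃ A₄ : ℝ × ℝ) : Prop :=
  AffineIndependent ℝ ![A₁, A₂, A₃] ∧ AffineIndependent ℝ ![A₂, A₃, A₄] ∧
  AffineIndependent ℝ ![A₃, A₄, A₁] ∧ AffineIndependent ℝ ![A₄, A₁, A₂] ∧
  ∃ P : ℝ × ℝ, P ∈ openSegment ℝ A₁ A₃ ∧ P ∈ openSegment ℝ A₂ A₄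

/-- Midpoint diagonal quadrilateral. -/
def IsMidpointDiagonalQuad (A₁ A₂ A₃ A₄ : ℝ × ℝ) : Prop :=
  ∃ P : ℝ × ℝ, P ∈ openSegment ℝ A₁ A₃ ∧ P ∈ openSegment ℝ A₂ A₄ ∧
    (P = midpoint ℝ A₁ A₃ ∨ P = midpoint ℝ A₂ A₄)

/-- The unit circle. -/
def unitCircle : Set (ℝ × ℝ) := {p : ℝ × ℝ | p.1 ^ 2 + p.2 ^ 2 = 1}

/-- The ellipse `f '' unitCircle` (with center `f 0`) is inscribed in the
quadrilateral `A₁A₂A₃A₄`: it lies inside the quadrilateral and touches each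
of the four sides. -/
def InscribedEllipse (f : (ℝ × ℝ) ≃ᵃ[ℝ] (ℝ × ℝ)) (A₁ A₂ A₃ A₄ : ℝ × ℝ) : Prop :=
  f '' unitCircle ⊆ convexHull ℝ {A₁, A₂, A₃, A₄} ∧
  (∃ p ∈ f '' unitCircle, p ∈ segment ℝ A₁ A₂) ∧
  (∃ p ∈ f '' unitCircle, p ∈ segment ℝ A₂ A₃) ∧
  (∃ p ∈ f '' unitCircle, p ∈ segment ℝ A₃ A₄) ∧
  (∃ p ∈ f '' unitCircle, p ∈ segment ℝ A₄ A₁)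

/-- The diameters of the ellipse `S` with center `c` in the directions `u` and
`v` are conjugate: the midpoint of every chord of `S` parallel to `u` lies on
the line through `c` with direction `v`. -/
def ConjugateDiameters (S : Set (ℝ × ℝ)) (c u v : ℝ × ℝ) : Prop :=
  u ≠ 0 ∧ v ≠ 0 ∧
    ∀ p q, p ∈ S → q ∈ S → p ≠ q → (∃ t : ℝ, p - q = t • u) →
      ∃ t : ℝ, midpoint ℝ p q = c + t • v

/-! ### Auxiliary lemmas -/

open Complex in
noncomputable def qc (v : ℝ × ℝ) : ℂ := (v.1 : ℂ) + v.2 * Complex.I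

lemma qc_inj {a b : ℝ × ℝ} (h : qc a = qc b) : a = b := by
  simp only [qc, Complex.ext_iff, Complex.add_re, Complex.ofReal_re, Complex.mul_re,
    Complex.ofReal_im, Complex.I_re, Complex.I_im, Complex.add_im, Complex.mul_im] at h
  exact Prod.ext (by linarith [h.1]) (by linarith [h.2])

lemma qc_add (a b : ℝ × ℝ) : qc (a + b) = qc a + qc b := by
  simp only [qc, Prod.fst_add, Prod.snd_add]; push_cast; ring

lemma qc_sub (a b : ℝ × ℝ) : qc (a - b) = qc a - qc b := by
  simp only [qc, Prod.fst_sub, Prod.snd_sub]; push_cast; ring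

lemma qc_smul (t : ℝ) (a : ℝ × ℝ) : qc (t • a) = (t : ℂ) * qc a := by
  simp only [qc, Prod.smul_fst, Prod.smul_snd, smul_eq_mul]; push_cast; ring

lemma qc_zero : qc (0 : ℝ × ℝ) = 0 := by
  simp [qc]

lemma qc_normSq (v : ℝ × ℝ) :
    qc v * (starRingEnd ℂ) (qc v) = ((v.1 ^ 2 + v.2 ^ 2 : ℝ) : ℂ) := by
  simp only [qc, map_add, map_mul, Complex.conj_ofReal, Complex.conj_I]
  push_cast
  linear_combination (-(v.2 : ℂ) ^ 2) * Complex.I_sq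

lemma qc_dot (v w : ℝ × ℝ) :
    qc v * (starRingEnd ℂ) (qc w) + (starRingEnd ℂ) (qc v) * qc w
      = 2 * ((v.1 * w.1 + v.2 * w.2 : ℝ) : ℂ) := by
  simp only [qc, map_add, map_mul, Complex.conj_ofReal, Complex.conj_I]
  push_cast
  linear_combination (-2 * (v.2 : ℂ) * (w.2 : ℂ)) * Complex.I_sq

lemma qc_cross (v w : ℝ × ℝ) :
    (starRingEnd ℂ) (qc v) * qc w - qc v * (starRingEnd ℂ) (qc w)
      = 2 * Complex.I * ((v.1 * w.2 - v.2 * w.1 : ℝ) : ℂ) := by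
  simp only [qc, map_add, map_mul, Complex.conj_ofReal, Complex.conj_I]
  push_cast
  ring

lemma sumsq_pos {v : ℝ × ℝ} (hv : v ≠ 0) : 0 < v.1 ^ 2 + v.2 ^ 2 := by
  rcases lt_or_eq_of_le (by positivity : (0:ℝ) ≤ v.1 ^ 2 + v.2 ^ 2) with h | h
  · exact h
  · exfalso
    apply hv
    have h1 : v.1 = 0 := by nlinarith [sq_nonneg v.1, sq_nonneg v.2]
    have h2 : v.2 = 0 := by nlinarith [sq_nonneg v.1, sq_nonneg v.2]
    exact Prod.ext h1 h2

lemma cross_ne_of_affineIndependent {x y w : ℝ × ℝ}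
    (h : AffineIndependent ℝ ![x, y, w]) :
    (y.1 - x.1) * (w.2 - x.2) - (y.2 - x.2) * (w.1 - x.1) ≠ 0 := by
  intro hc
  rw [affineIndependent_iff_not_collinear_set] at h
  apply h
  rw [collinear_iff_of_mem (Set.mem_insert x {y, w})]
  by_cases hyx : y = x
  · refine ⟨w - x, ?_⟩
    intro p hp
    rcases hp with rfl | rfl | rfl
    · exact ⟨0, by simp⟩
    · exact ⟨0, by simp [hyx]⟩
    · exact ⟨1, by simp⟩
  · refine ⟨y - x, ?_⟩
    have hd : (0:ℝ) < (y.1 - x.1) ^ 2 + (y.2 - x.2) ^ 2 := by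
      have : y - x ≠ 0 := sub_ne_zero.mpr hyx
      simpa using sumsq_pos this
    intro p hp
    rcases hp with rfl | rfl | rfl
    · exact ⟨0, by simp⟩
    · exact ⟨1, by simp⟩
    · refine ⟨((p.1 - x.1) * (y.1 - x.1) + (p.2 - x.2) * (y.2 - x.2)) /
        ((y.1 - x.1) ^ 2 + (y.2 - x.2) ^ 2), ?_⟩
      have hd' : (y.1 - x.1) ^ 2 + (y.2 - x.2) ^ 2 ≠ 0 := ne_of_gt hd
      apply Prod.ext
      · simp only [vadd_eq_add, Prod.fst_add, Prod.smul_fst, Prod.fst_sub, smul_eq_mul]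
        field_simp
        linear_combination (x.2 - y.2) * hc
      · simp only [vadd_eq_add, Prod.snd_add, Prod.smul_snd, Prod.snd_sub, smul_eq_mul]
        field_simp
        linear_combination (y.1 - x.1) * hc


lemma cross_eq_zero_of_dot {z x y w : ℝ × ℝ} (hz : z ≠ 0)
    (h1 : z.1 * x.1 + z.2 * x.2 = 1) (h2 : z.1 * y.1 + z.2 * y.2 = 1)
    (h3 : z.1 * w.1 + z.2 * w.2 = 1) :
    (y.1 - x.1) * (w.2 - x.2) - (y.2 - x.2) * (w.1 - x.1) = 0 := by
  rcases (by simpa [Prod.ext_iff] using hz : ¬(z.1 = 0 ∧ z.2 = 0)) |> not_and_or.mp with h | h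
  all_goals
    have key1 : ((y.1 - x.1) * (w.2 - x.2) - (y.2 - x.2) * (w.1 - x.1)) * z.1 = 0 := by
      linear_combination (w.2 - x.2) * h2 - (w.2 - x.2) * h1 - (y.2 - x.2) * h3 +
        (y.2 - x.2) * h1
    have key2 : ((y.1 - x.1) * (w.2 - x.2) - (y.2 - x.2) * (w.1 - x.1)) * z.2 = 0 := by
      linear_combination (y.1 - x.1) * h3 - (y.1 - x.1) * h1 - (w.1 - x.1) * h2 +
        (w.1 - x.1) * h1
  · exact (mul_eq_zero.mp key1).resolve_right h
  · exact (mul_eq_zero.mp key2).resolve_right h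

set_option maxHeartbeats 1000000 in
lemma tangent_support {n : ℝ × ℝ} {c : ℝ} (hn : n ≠ 0) {V W S T x : ℝ × ℝ}
    (hV : n.1 * V.1 + n.2 * V.2 = c) (hW : n.1 * W.1 + n.2 * W.2 = c)
    (hS : n.1 * S.1 + n.2 * S.2 ≤ c) (hT : n.1 * T.1 + n.2 * T.2 ≤ c)
    (hcirc : ∀ w ∈ unitCircle, w ∈ convexHull ℝ ({V, W, S, T} : Set (ℝ × ℝ)))
    (hx : x ∈ unitCircle) (hxseg : x ∈ segment ℝ V W) :
    x.1 * V.1 + x.2 * V.2 = 1 ∧ x.1 * W.1 + x.2 * W.2 = 1 := by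
  have hlin : IsLinearMap ℝ (fun w : ℝ × ℝ => n.1 * w.1 + n.2 * w.2) := by
    constructor
    · intro p q; simp only [Prod.fst_add, Prod.snd_add]; ring
    · intro t p; simp only [Prod.smul_fst, Prod.smul_snd, smul_eq_mul]; ring
  have hhalf : convexHull ℝ ({V, W, S, T} : Set (ℝ × ℝ)) ⊆
      {w : ℝ × ℝ | n.1 * w.1 + n.2 * w.2 ≤ c} := by
    apply convexHull_min _ (convex_halfSpace_le hlin c)
    intro y hy
    rcases hy with rfl | rfl | rfl | rfl
    · exact le_of_eq hV
    · exact le_of_eq hW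
    · exact hS
    · exact hT
  have hcircle_le : ∀ w ∈ unitCircle, n.1 * w.1 + n.2 * w.2 ≤ c :=
    fun w hw => hhalf (hcirc w hw)
  set m : ℝ := Real.sqrt (n.1 ^ 2 + n.2 ^ 2) with hm
  have hm0 : 0 < m := Real.sqrt_pos.mpr (sumsq_pos hn)
  have hm2 : m ^ 2 = n.1 ^ 2 + n.2 ^ 2 := Real.sq_sqrt (by positivity)
  have hw0 : ((n.1 / m, n.2 / m) : ℝ × ℝ) ∈ unitCircle := by
    show (n.1 / m) ^ 2 + (n.2 / m) ^ 2 = 1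
    field_simp
    linarith [hm2]
  have hmc : m ≤ c := by
    have := hcircle_le _ hw0
    simp only at this
    have h2 : n.1 * (n.1 / m) + n.2 * (n.2 / m) = m := by
      field_simp
      linarith [hm2]
    linarith [this, h2.symm.le]
  have hc0 : 0 < c := lt_of_lt_of_le hm0 hmc
  -- x lies on the line
  obtain ⟨a, b, ha, hb, hab, hxc⟩ := hxseg
  have hx1 : a * V.1 + b * W.1 = x.1 := by
    have := congrArg Prod.fst hxc
    simpa [Prod.fst_add, Prod.smul_fst, smul_eq_mul] using this
  have hx2 : a * V.2 + b * W.2 = x.2 := by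
    have := congrArg Prod.snd hxc
    simpa [Prod.snd_add, Prod.smul_snd, smul_eq_mul] using this
  have hxline : n.1 * x.1 + n.2 * x.2 = c := by
    linear_combination -n.1 * hx1 - n.2 * hx2 + a * hV + b * hW + c * hab
  have hxcirc : x.1 ^ 2 + x.2 ^ 2 = 1 := hx
  -- Cauchy-Schwarz equality forces c • x = n
  have hsq : (c * x.1 - n.1) ^ 2 + (c * x.2 - n.2) ^ 2 = m ^ 2 - c ^ 2 := by
    linear_combination (c ^ 2) * hxcirc - 2 * c * hxline - hm2
  have hle : m ^ 2 - c ^ 2 ≤ 0 := by nlinarith [hmc, hm0]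
  have hsum : (c * x.1 - n.1) ^ 2 + (c * x.2 - n.2) ^ 2 ≤ 0 := hsq.le.trans hle
  have h1 : c * x.1 - n.1 = 0 := by
    have : (c * x.1 - n.1) ^ 2 = 0 :=
      le_antisymm (by linarith [sq_nonneg (c * x.2 - n.2)]) (sq_nonneg _)
    exact sq_eq_zero_iff.mp this
  have h2 : c * x.2 - n.2 = 0 := by
    have : (c * x.2 - n.2) ^ 2 = 0 :=
      le_antisymm (by linarith [sq_nonneg (c * x.1 - n.1)]) (sq_nonneg _)
    exact sq_eq_zero_iff.mp this
  have hcne : c ≠ 0 := ne_of_gt hc0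
  constructor
  · have hthis : c * (x.1 * V.1 + x.2 * V.2) = c * 1 := by
      linear_combination V.1 * h1 + V.2 * h2 + hV
    exact mul_left_cancel₀ hcne hthis
  · have hthis : c * (x.1 * W.1 + x.2 * W.2) = c * 1 := by
      linear_combination W.1 * h1 + W.2 * h2 + hW
    exact mul_left_cancel₀ hcne hthis

lemma tangency {V W S T x P : ℝ × ℝ}
    (hx : x ∈ unitCircle) (hxseg : x ∈ segment ℝ V W)
    (hcirc : ∀ w ∈ unitCircle, w ∈ convexHull ℝ ({V, W, S, T} : Set (ℝ × ℝ)))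
    (hind : AffineIndependent ℝ ![V, W, S])
    (hP1 : P ∈ openSegment ℝ V S) (hP2 : P ∈ openSegment ℝ W T) :
    x.1 * V.1 + x.2 * V.2 = 1 ∧ x.1 * W.1 + x.2 * W.2 = 1 := by
  set n : ℝ × ℝ := (V.2 - W.2, W.1 - V.1) with hn
  have hVW : V ≠ W := hind.injective.ne (by decide : (0 : Fin 3) ≠ 1)
  have hn0 : n ≠ 0 := by
    intro h
    apply hVW
    rw [Prod.ext_iff] at h ⊢
    simp only [hn, Prod.fst_zero, Prod.snd_zero] at h
    constructor <;> [linarith [h.2]; linarith [h.1]]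
  have hWV : n.1 * W.1 + n.2 * W.2 = n.1 * V.1 + n.2 * V.2 := by
    simp only [hn]; ring
  clear_value n
  have hcSne : n.1 * S.1 + n.2 * S.2 - (n.1 * V.1 + n.2 * V.2) ≠ 0 := by
    have hcr := cross_ne_of_affineIndependent hind
    intro h
    apply hcr
    simp only [hn] at h
    linear_combination h
  obtain ⟨a1, b1, ha1, hb1, hab1, hP1e⟩ := hP1
  obtain ⟨a2, b2, ha2, hb2, hab2, hP2e⟩ := hP2
  have e1x : a1 * V.1 + b1 * S.1 = P.1 := by
    have := congrArg Prod.fst hP1e; simpa [Prod.fst_add, Prod.smul_fst, smul_eq_mul] using this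
  have e1y : a1 * V.2 + b1 * S.2 = P.2 := by
    have := congrArg Prod.snd hP1e; simpa [Prod.snd_add, Prod.smul_snd, smul_eq_mul] using this
  have e2x : a2 * W.1 + b2 * T.1 = P.1 := by
    have := congrArg Prod.fst hP2e; simpa [Prod.fst_add, Prod.smul_fst, smul_eq_mul] using this
  have e2y : a2 * W.2 + b2 * T.2 = P.2 := by
    have := congrArg Prod.snd hP2e; simpa [Prod.snd_add, Prod.smul_snd, smul_eq_mul] using this
  have hbal : b1 * (n.1 * S.1 + n.2 * S.2 - (n.1 * V.1 + n.2 * V.2))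
      = b2 * (n.1 * T.1 + n.2 * T.2 - (n.1 * V.1 + n.2 * V.2)) := by
    linear_combination (n.1 * e1x + n.2 * e1y) - (n.1 * e2x + n.2 * e2y) + a2 * hWV -
      (n.1 * V.1 + n.2 * V.2) * hab1 + (n.1 * V.1 + n.2 * V.2) * hab2
  rcases lt_trichotomy (n.1 * S.1 + n.2 * S.2 - (n.1 * V.1 + n.2 * V.2)) 0 with hneg | hzero | hpos
  · have hTneg : n.1 * T.1 + n.2 * T.2 - (n.1 * V.1 + n.2 * V.2) ≤ 0 := by
      nlinarith [hbal, hb1, hb2, hneg]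
    exact tangent_support hn0 rfl hWV (by linarith) (by linarith) hcirc hx hxseg
  · exact absurd hzero hcSne
  · have hTpos : 0 ≤ n.1 * T.1 + n.2 * T.2 - (n.1 * V.1 + n.2 * V.2) := by
      nlinarith [hbal, hb1, hb2, hpos]
    exact tangent_support (n := -n) (c := -(n.1 * V.1 + n.2 * V.2)) (neg_ne_zero.mpr hn0)
      (by simp only [Prod.fst_neg, Prod.snd_neg]; ring)
      (by simp only [Prod.fst_neg, Prod.snd_neg]; linarith [hWV])
      (by simp only [Prod.fst_neg, Prod.snd_neg]; linarith [hpos])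
      (by simp only [Prod.fst_neg, Prod.snd_neg]; linarith [hTpos])
      hcirc hx hxseg

lemma vertexRel {za zb b X : ℂ} (h1 : za ^ 2 * X + b = 2 * za) (h2 : zb ^ 2 * X + b = 2 * zb)
    (hne : za ≠ zb) : X * (za + zb) = 2 ∧ b * (za + zb) = 2 * (za * zb) := by
  have hdiff : (za - zb) * (X * (za + zb) - 2) = 0 := by linear_combination h1 - h2
  have hX : X * (za + zb) = 2 := by
    rcases mul_eq_zero.mp hdiff with h | h
    · exact absurd (sub_eq_zero.mp h) hne
    · exact sub_eq_zero.mp h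
  refine ⟨hX, ?_⟩
  linear_combination (za + zb) * h1 - za ^ 2 * hX

set_option maxHeartbeats 1600000 in
/-- Pure complex-number core: tangential quadrilateral with perpendicular
diagonals has one diagonal bisected by the other. -/
lemma keyAlgebraC {ζ1 ζ2 ζ3 ζ4 β1 β2 β3 β4 X1 X2 X3 X4 : ℂ}
    (q11 : ζ1 ^ 2 * X1 + β1 = 2 * ζ1) (q41 : ζ4 ^ 2 * X1 + β1 = 2 * ζ4)
    (q12 : ζ1 ^ 2 * X2 + β2 = 2 * ζ1) (q22 : ζ2 ^ 2 * X2 + β2 = 2 * ζ2)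
    (q23 : ζ2 ^ 2 * X3 + β3 = 2 * ζ2) (q33 : ζ3 ^ 2 * X3 + β3 = 2 * ζ3)
    (q34 : ζ3 ^ 2 * X4 + β4 = 2 * ζ3) (q44 : ζ4 ^ 2 * X4 + β4 = 2 * ζ4)
    (cne41 : ζ4 ≠ ζ1) (cne12 : ζ1 ≠ ζ2) (cne23 : ζ2 ≠ ζ3) (cne34 : ζ3 ≠ ζ4)
    (cs1 : ζ4 + ζ1 ≠ 0) (cs2 : ζ1 + ζ2 ≠ 0) (cs3 : ζ2 + ζ3 ≠ 0) (cs4 : ζ3 + ζ4 ≠ 0)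
    (hperpC : (β3 - β1) * (X4 - X2) + (X3 - X1) * (β4 - β2) = 0) :
    (X4 - X2) * (β1 + β3 - 2 * β2) - (β4 - β2) * (X1 + X3 - 2 * X2) = 0 ∨
    (X3 - X1) * (β2 + β4 - 2 * β1) - (β3 - β1) * (X2 + X4 - 2 * X1) = 0 := by
  obtain ⟨hXv1, hβv1⟩ := vertexRel q41 q11 cne41
  obtain ⟨hXv2, hβv2⟩ := vertexRel q12 q22 cne12
  obtain ⟨hXv3, hβv3⟩ := vertexRel q23 q33 cne23
  obtain ⟨hXv4, hβv4⟩ := vertexRel q34 q44 cne34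
  have hw1 : (β3 - β1) * ((ζ2 + ζ3) * (ζ4 + ζ1)) =
      2 * (ζ2 * ζ3 * (ζ4 + ζ1) - ζ4 * ζ1 * (ζ2 + ζ3)) := by
    linear_combination (ζ4 + ζ1) * hβv3 - (ζ2 + ζ3) * hβv1
  have hcw1 : (X3 - X1) * ((ζ2 + ζ3) * (ζ4 + ζ1)) = 2 * ((ζ4 + ζ1) - (ζ2 + ζ3)) := by
    linear_combination (ζ4 + ζ1) * hXv3 - (ζ2 + ζ3) * hXv1
  have hw2 : (β4 - β2) * ((ζ3 + ζ4) * (ζ1 + ζ2)) =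
      2 * (ζ3 * ζ4 * (ζ1 + ζ2) - ζ1 * ζ2 * (ζ3 + ζ4)) := by
    linear_combination (ζ1 + ζ2) * hβv4 - (ζ3 + ζ4) * hβv2
  have hcw2 : (X4 - X2) * ((ζ3 + ζ4) * (ζ1 + ζ2)) = 2 * ((ζ1 + ζ2) - (ζ3 + ζ4)) := by
    linear_combination (ζ1 + ζ2) * hXv4 - (ζ3 + ζ4) * hXv2
  have key : ((β3 - β1) * (X4 - X2) + (X3 - X1) * (β4 - β2)) *
      ((ζ2 + ζ3) * (ζ4 + ζ1) * ((ζ3 + ζ4) * (ζ1 + ζ2))) =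
      8 * ((ζ1 * ζ2 - ζ3 * ζ4) * (ζ2 * ζ3 - ζ4 * ζ1)) := by
    linear_combination ((X4 - X2) * ((ζ3 + ζ4) * (ζ1 + ζ2))) * hw1 +
      (2 * (ζ2 * ζ3 * (ζ4 + ζ1) - ζ4 * ζ1 * (ζ2 + ζ3))) * hcw2 +
      ((β4 - β2) * ((ζ3 + ζ4) * (ζ1 + ζ2))) * hcw1 +
      (2 * ((ζ4 + ζ1) - (ζ2 + ζ3))) * hw2
  have hFF : (ζ1 * ζ2 - ζ3 * ζ4) * (ζ2 * ζ3 - ζ4 * ζ1) = 0 := by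
    have h0 : (8 : ℂ) * ((ζ1 * ζ2 - ζ3 * ζ4) * (ζ2 * ζ3 - ζ4 * ζ1)) = 0 := by
      rw [← key, hperpC, zero_mul]
    rcases mul_eq_zero.mp h0 with h | h
    · norm_num at h
    · exact h
  rcases mul_eq_zero.mp hFF with hF | hF
  · left
    have hμ : (β1 + β3 - 2 * β2) * ((ζ4 + ζ1) * ((ζ1 + ζ2) * (ζ2 + ζ3))) =
        2 * (ζ4 * ζ1 * ((ζ1 + ζ2) * (ζ2 + ζ3)) + ζ2 * ζ3 * ((ζ4 + ζ1) * (ζ1 + ζ2)) -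
          2 * (ζ1 * ζ2 * ((ζ4 + ζ1) * (ζ2 + ζ3)))) := by
      linear_combination ((ζ1 + ζ2) * (ζ2 + ζ3)) * hβv1 + ((ζ4 + ζ1) * (ζ1 + ζ2)) * hβv3 -
        (2 * ((ζ4 + ζ1) * (ζ2 + ζ3))) * hβv2
    have hcμ : (X1 + X3 - 2 * X2) * ((ζ4 + ζ1) * ((ζ1 + ζ2) * (ζ2 + ζ3))) =
        2 * ((ζ1 + ζ2) * (ζ2 + ζ3) + (ζ4 + ζ1) * (ζ1 + ζ2) -
          2 * ((ζ4 + ζ1) * (ζ2 + ζ3))) := by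
      linear_combination ((ζ1 + ζ2) * (ζ2 + ζ3)) * hXv1 + ((ζ4 + ζ1) * (ζ1 + ζ2)) * hXv3 -
        (2 * ((ζ4 + ζ1) * (ζ2 + ζ3))) * hXv2
    have key1 : ((X4 - X2) * (β1 + β3 - 2 * β2) - (β4 - β2) * (X1 + X3 - 2 * X2)) *
        ((ζ4 + ζ1) * ((ζ1 + ζ2) * (ζ2 + ζ3)) * ((ζ3 + ζ4) * (ζ1 + ζ2))) =
        8 * ((ζ1 * ζ2 - ζ3 * ζ4) * ((ζ1 + ζ2) * (ζ2 - ζ4) * (ζ3 - ζ1))) := by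
      linear_combination ((X4 - X2) * ((ζ3 + ζ4) * (ζ1 + ζ2))) * hμ +
        (2 * (ζ4 * ζ1 * ((ζ1 + ζ2) * (ζ2 + ζ3)) + ζ2 * ζ3 * ((ζ4 + ζ1) * (ζ1 + ζ2)) -
          2 * (ζ1 * ζ2 * ((ζ4 + ζ1) * (ζ2 + ζ3))))) * hcw2 -
        ((β4 - β2) * ((ζ3 + ζ4) * (ζ1 + ζ2))) * hcμ -
        (2 * ((ζ1 + ζ2) * (ζ2 + ζ3) + (ζ4 + ζ1) * (ζ1 + ζ2) -
          2 * ((ζ4 + ζ1) * (ζ2 + ζ3)))) * hw2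
    have h0 : ((X4 - X2) * (β1 + β3 - 2 * β2) - (β4 - β2) * (X1 + X3 - 2 * X2)) *
        ((ζ4 + ζ1) * ((ζ1 + ζ2) * (ζ2 + ζ3)) * ((ζ3 + ζ4) * (ζ1 + ζ2))) = 0 := by
      rw [key1, hF]; ring
    rcases mul_eq_zero.mp h0 with h | h
    · exact h
    · exact absurd h (by
        apply mul_ne_zero
        · exact mul_ne_zero cs1 (mul_ne_zero cs2 cs3)
        · exact mul_ne_zero cs4 cs2)
  · right
    have hμ : (β2 + β4 - 2 * β1) * ((ζ1 + ζ2) * ((ζ3 + ζ4) * (ζ4 + ζ1))) =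
        2 * (ζ1 * ζ2 * ((ζ3 + ζ4) * (ζ4 + ζ1)) + ζ3 * ζ4 * ((ζ1 + ζ2) * (ζ4 + ζ1)) -
          2 * (ζ4 * ζ1 * ((ζ1 + ζ2) * (ζ3 + ζ4)))) := by
      linear_combination ((ζ3 + ζ4) * (ζ4 + ζ1)) * hβv2 + ((ζ1 + ζ2) * (ζ4 + ζ1)) * hβv4 -
        (2 * ((ζ1 + ζ2) * (ζ3 + ζ4))) * hβv1
    have hcμ : (X2 + X4 - 2 * X1) * ((ζ1 + ζ2) * ((ζ3 + ζ4) * (ζ4 + ζ1))) =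
        2 * ((ζ3 + ζ4) * (ζ4 + ζ1) + (ζ1 + ζ2) * (ζ4 + ζ1) -
          2 * ((ζ1 + ζ2) * (ζ3 + ζ4))) := by
      linear_combination ((ζ3 + ζ4) * (ζ4 + ζ1)) * hXv2 + ((ζ1 + ζ2) * (ζ4 + ζ1)) * hXv4 -
        (2 * ((ζ1 + ζ2) * (ζ3 + ζ4))) * hXv1
    have key2 : ((X3 - X1) * (β2 + β4 - 2 * β1) - (β3 - β1) * (X2 + X4 - 2 * X1)) *
        ((ζ1 + ζ2) * ((ζ3 + ζ4) * (ζ4 + ζ1)) * ((ζ2 + ζ3) * (ζ4 + ζ1))) =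
        8 * ((ζ2 * ζ3 - ζ4 * ζ1) * ((ζ4 + ζ1) * (ζ4 - ζ2) * (ζ1 - ζ3))) := by
      linear_combination ((X3 - X1) * ((ζ2 + ζ3) * (ζ4 + ζ1))) * hμ +
        (2 * (ζ1 * ζ2 * ((ζ3 + ζ4) * (ζ4 + ζ1)) + ζ3 * ζ4 * ((ζ1 + ζ2) * (ζ4 + ζ1)) -
          2 * (ζ4 * ζ1 * ((ζ1 + ζ2) * (ζ3 + ζ4))))) * hcw1 -
        ((β3 - β1) * ((ζ2 + ζ3) * (ζ4 + ζ1))) * hcμ -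
        (2 * ((ζ3 + ζ4) * (ζ4 + ζ1) + (ζ1 + ζ2) * (ζ4 + ζ1) -
          2 * ((ζ1 + ζ2) * (ζ3 + ζ4)))) * hw1
    have h0 : ((X3 - X1) * (β2 + β4 - 2 * β1) - (β3 - β1) * (X2 + X4 - 2 * X1)) *
        ((ζ1 + ζ2) * ((ζ3 + ζ4) * (ζ4 + ζ1)) * ((ζ2 + ζ3) * (ζ4 + ζ1))) = 0 := by
      rw [key2, hF]; ring
    rcases mul_eq_zero.mp h0 with h | h
    · exact h
    · exact absurd h (by
        apply mul_ne_zero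
        · exact mul_ne_zero cs2 (mul_ne_zero cs4 cs1)
        · exact mul_ne_zero cs3 cs1)

set_option maxHeartbeats 1600000 in
lemma keyAlgebra {z1 z2 z3 z4 B1 B2 B3 B4 : ℝ × ℝ}
    (hz1 : z1 ∈ unitCircle) (hz2 : z2 ∈ unitCircle) (hz3 : z3 ∈ unitCircle)
    (hz4 : z4 ∈ unitCircle)
    (h11 : z1.1 * B1.1 + z1.2 * B1.2 = 1) (h12 : z1.1 * B2.1 + z1.2 * B2.2 = 1)
    (h22 : z2.1 * B2.1 + z2.2 * B2.2 = 1) (h23 : z2.1 * B3.1 + z2.2 * B3.2 = 1)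
    (h33 : z3.1 * B3.1 + z3.2 * B3.2 = 1) (h34 : z3.1 * B4.1 + z3.2 * B4.2 = 1)
    (h44 : z4.1 * B4.1 + z4.2 * B4.2 = 1) (h41 : z4.1 * B1.1 + z4.2 * B1.2 = 1)
    (hne41 : z4 ≠ z1) (hne12 : z1 ≠ z2) (hne23 : z2 ≠ z3) (hne34 : z3 ≠ z4)
    (hs1 : z4 + z1 ≠ 0) (hs2 : z1 + z2 ≠ 0) (hs3 : z2 + z3 ≠ 0) (hs4 : z3 + z4 ≠ 0)
    (hperp : (B3.1 - B1.1) * (B4.1 - B2.1) + (B3.2 - B1.2) * (B4.2 - B2.2) = 0) :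
    (B4.1 - B2.1) * (B1.2 + B3.2 - 2 * B2.2) - (B4.2 - B2.2) * (B1.1 + B3.1 - 2 * B2.1) = 0 ∨
    (B3.1 - B1.1) * (B2.2 + B4.2 - 2 * B1.2) - (B3.2 - B1.2) * (B2.1 + B4.1 - 2 * B1.1) = 0 := by
  have hu1 : qc z1 * (starRingEnd ℂ) (qc z1) = 1 := by
    rw [qc_normSq, show z1.1 ^ 2 + z1.2 ^ 2 = 1 from hz1]; norm_num
  have hu2 : qc z2 * (starRingEnd ℂ) (qc z2) = 1 := by
    rw [qc_normSq, show z2.1 ^ 2 + z2.2 ^ 2 = 1 from hz2]; norm_num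
  have hu3 : qc z3 * (starRingEnd ℂ) (qc z3) = 1 := by
    rw [qc_normSq, show z3.1 ^ 2 + z3.2 ^ 2 = 1 from hz3]; norm_num
  have hu4 : qc z4 * (starRingEnd ℂ) (qc z4) = 1 := by
    rw [qc_normSq, show z4.1 ^ 2 + z4.2 ^ 2 = 1 from hz4]; norm_num
  have tan : ∀ (z B : ℝ × ℝ), z.1 * B.1 + z.2 * B.2 = 1 →
      qc z * (starRingEnd ℂ) (qc B) + (starRingEnd ℂ) (qc z) * qc B = 2 := by
    intro z B h
    rw [qc_dot, h]; norm_num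
  have qgen : ∀ (z B : ℝ × ℝ), z.1 * B.1 + z.2 * B.2 = 1 →
      qc z * (starRingEnd ℂ) (qc z) = 1 →
      (qc z) ^ 2 * (starRingEnd ℂ) (qc B) + qc B = 2 * qc z := by
    intro z B h hu
    have t := tan z B h
    linear_combination (qc z) * t - (qc B) * hu
  have q11 := qgen z1 B1 h11 hu1
  have q41 := qgen z4 B1 h41 hu4
  have q12 := qgen z1 B2 h12 hu1
  have q22 := qgen z2 B2 h22 hu2
  have q23 := qgen z2 B3 h23 hu2
  have q33 := qgen z3 B3 h33 hu3
  have q34 := qgen z3 B4 h34 hu3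
  have q44 := qgen z4 B4 h44 hu4
  have cne41 : qc z4 ≠ qc z1 := fun h => hne41 (qc_inj h)
  have cne12 : qc z1 ≠ qc z2 := fun h => hne12 (qc_inj h)
  have cne23 : qc z2 ≠ qc z3 := fun h => hne23 (qc_inj h)
  have cne34 : qc z3 ≠ qc z4 := fun h => hne34 (qc_inj h)
  have qcsum : ∀ a b : ℝ × ℝ, a + b ≠ 0 → qc a + qc b ≠ 0 := by
    intro a b hab h
    apply hab
    have : qc (a + b) = qc 0 := by rw [qc_add, qc_zero, h]
    exact qc_inj this
  have cs1 := qcsum z4 z1 hs1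
  have cs2 := qcsum z1 z2 hs2
  have cs3 := qcsum z2 z3 hs3
  have cs4 := qcsum z3 z4 hs4
  have hperpC : (qc B3 - qc B1) * ((starRingEnd ℂ) (qc B4) - (starRingEnd ℂ) (qc B2)) +
      ((starRingEnd ℂ) (qc B3) - (starRingEnd ℂ) (qc B1)) * (qc B4 - qc B2) = 0 := by
    have hd := qc_dot (B3 - B1) (B4 - B2)
    rw [qc_sub, qc_sub, map_sub, map_sub] at hd
    rw [show (B3 - B1).1 = B3.1 - B1.1 from rfl, show (B3 - B1).2 = B3.2 - B1.2 from rfl,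
      show (B4 - B2).1 = B4.1 - B2.1 from rfl, show (B4 - B2).2 = B4.2 - B2.2 from rfl,
      hperp] at hd
    rw [hd]
    norm_num
  rcases keyAlgebraC q11 q41 q12 q22 q23 q33 q34 q44 cne41 cne12 cne23 cne34
    cs1 cs2 cs3 cs4 hperpC with hE | hE
  · left
    have hcr := qc_cross (B4 - B2) (B1 + B3 - B2 - B2)
    rw [qc_sub, qc_sub, qc_sub, qc_add, map_sub, map_sub, map_sub, map_add] at hcr
    have h0 : (2 : ℂ) * Complex.I *
        (((B4 - B2).1 * (B1 + B3 - B2 - B2).2 - (B4 - B2).2 * (B1 + B3 - B2 - B2).1 : ℝ) : ℂ)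
        = 0 := by
      rw [← hcr]; linear_combination hE
    have hre : ((B4 - B2).1 * (B1 + B3 - B2 - B2).2 - (B4 - B2).2 * (B1 + B3 - B2 - B2).1 : ℝ)
        = 0 := by
      rcases mul_eq_zero.mp h0 with h | h
      · exfalso
        rcases mul_eq_zero.mp h with h' | h'
        · norm_num at h'
        · exact Complex.I_ne_zero h'
      · exact_mod_cast h
    rw [show (B4 - B2).1 = B4.1 - B2.1 from rfl, show (B4 - B2).2 = B4.2 - B2.2 from rfl,
      show (B1 + B3 - B2 - B2).1 = B1.1 + B3.1 - B2.1 - B2.1 from rfl,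
      show (B1 + B3 - B2 - B2).2 = B1.2 + B3.2 - B2.2 - B2.2 from rfl] at hre
    linarith [hre]
  · right
    have hcr := qc_cross (B3 - B1) (B2 + B4 - B1 - B1)
    rw [qc_sub, qc_sub, qc_sub, qc_add, map_sub, map_sub, map_sub, map_add] at hcr
    have h0 : (2 : ℂ) * Complex.I *
        (((B3 - B1).1 * (B2 + B4 - B1 - B1).2 - (B3 - B1).2 * (B2 + B4 - B1 - B1).1 : ℝ) : ℂ)
        = 0 := by
      rw [← hcr]; linear_combination hE
    have hre : ((B3 - B1).1 * (B2 + B4 - B1 - B1).2 - (B3 - B1).2 * (B2 + B4 - B1 - B1).1 : ℝ)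
        = 0 := by
      rcases mul_eq_zero.mp h0 with h | h
      · exfalso
        rcases mul_eq_zero.mp h with h' | h'
        · norm_num at h'
        · exact Complex.I_ne_zero h'
      · exact_mod_cast h
    rw [show (B3 - B1).1 = B3.1 - B1.1 from rfl, show (B3 - B1).2 = B3.2 - B1.2 from rfl,
      show (B2 + B4 - B1 - B1).1 = B2.1 + B4.1 - B1.1 - B1.1 from rfl,
      show (B2 + B4 - B1 - B1).2 = B2.2 + B4.2 - B1.2 - B1.2 from rfl] at hre
    linarith [hre]

lemma midpoint_coord (x y : ℝ × ℝ) : midpoint ℝ x y = ((x.1 + y.1) / 2, (x.2 + y.2) / 2) := by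
  rw [midpoint_eq_smul_add, invOf_eq_inv]
  apply Prod.ext
  · simp only [Prod.smul_fst, Prod.fst_add, smul_eq_mul]; ring
  · simp only [Prod.smul_snd, Prod.snd_add, smul_eq_mul]; ring

lemma diag_midpoint {B1 B2 B3 B4 P : ℝ × ℝ}
    (h13 : P ∈ openSegment ℝ B1 B3) (h24 : P ∈ openSegment ℝ B2 B4)
    (hind : AffineIndependent ℝ ![B4, B1, B2])
    (hcr : (B4.1 - B2.1) * (B1.2 + B3.2 - 2 * B2.2) -
      (B4.2 - B2.2) * (B1.1 + B3.1 - 2 * B2.1) = 0) :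
    P = midpoint ℝ B1 B3 := by
  obtain ⟨a, b, ha, hb, hab, hP⟩ := h13
  obtain ⟨c, d, hc, hd, hcd, hQ⟩ := h24
  have hPx : a * B1.1 + b * B3.1 = P.1 := by
    have := congrArg Prod.fst hP; simpa [Prod.fst_add, Prod.smul_fst, smul_eq_mul] using this
  have hPy : a * B1.2 + b * B3.2 = P.2 := by
    have := congrArg Prod.snd hP; simpa [Prod.snd_add, Prod.smul_snd, smul_eq_mul] using this
  have hQx : c * B2.1 + d * B4.1 = P.1 := by
    have := congrArg Prod.fst hQ; simpa [Prod.fst_add, Prod.smul_fst, smul_eq_mul] using this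
  have hQy : c * B2.2 + d * B4.2 = P.2 := by
    have := congrArg Prod.snd hQ; simpa [Prod.snd_add, Prod.smul_snd, smul_eq_mul] using this
  have ha' : a = 1 - b := by linarith
  have hc' : c = 1 - d := by linarith
  subst ha' hc'
  -- cross of diagonal directions
  have hK := cross_ne_of_affineIndependent hind
  -- K = b * X where X = cross(d13, d24)
  have hKX : (B1.1 - B4.1) * (B2.2 - B4.2) - (B1.2 - B4.2) * (B2.1 - B4.1) =
      b * ((B3.1 - B1.1) * (B4.2 - B2.2) - (B3.2 - B1.2) * (B4.1 - B2.1)) := by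
    linear_combination (B2.2 - B4.2) * (hPx - hQx) - (B2.1 - B4.1) * (hPy - hQy)
  have hX : (B3.1 - B1.1) * (B4.2 - B2.2) - (B3.2 - B1.2) * (B4.1 - B2.1) ≠ 0 := by
    intro h
    apply hK
    rw [hKX, h, mul_zero]
  have hc1 : (B4.1 - B2.1) * ((B1.2 - B2.2) + b * (B3.2 - B1.2)) -
      (B4.2 - B2.2) * ((B1.1 - B2.1) + b * (B3.1 - B1.1)) = 0 := by
    linear_combination (B4.1 - B2.1) * (hPy - hQy) - (B4.2 - B2.2) * (hPx - hQx)
  have hbX : (b - 1 / 2) * ((B3.1 - B1.1) * (B4.2 - B2.2) - (B3.2 - B1.2) * (B4.1 - B2.1))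
      = 0 := by
    linear_combination (1 / 2 : ℝ) * hcr - hc1
  have hb2 : b = 1 / 2 := by
    rcases mul_eq_zero.mp hbX with h | h
    · linarith
    · exact absurd h hX
  rw [midpoint_coord]
  apply Prod.ext
  · simp only
    rw [← hPx, hb2]; ring
  · simp only
    rw [← hPy, hb2]; ring

set_option maxHeartbeats 2000000 in
/-- If a convex quadrilateral is not a midpoint diagonal quadrilateral, then no
ellipse inscribed in it has a pair of conjugate diameters parallel to the two
diagonals. -/
theorem stmt15 (A₁ A₂ A₃ A₄ : ℝ × ℝ) (hconv : ConvexQuad A₁ A₂ A₃ A₄)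
    (hmdq : ¬ IsMidpointDiagonalQuad A₁ A₂ A₃ A₄)
    (f : (ℝ × ℝ) ≃ᵃ[ℝ] (ℝ × ℝ)) (hf : InscribedEllipse f A₁ A₂ A₃ A₄)
    (u v : ℝ × ℝ) (hu : ∃ k : ℝ, u = k • (A₃ - A₁)) (hv : ∃ k : ℝ, v = k • (A₄ - A₂)) :
    ¬ ConjugateDiameters (f '' unitCircle) (f 0) u v := by
  intro hcd
  obtain ⟨hq1, hq2, hq3, hq4, P, hP13, hP24⟩ := hconv
  obtain ⟨hu0, hv0, hchord⟩ := hcd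
  obtain ⟨k, hk⟩ := hu
  obtain ⟨l, hl⟩ := hv
  have hk0 : k ≠ 0 := by rintro rfl; rw [zero_smul] at hk; exact hu0 hk
  have hl0 : l ≠ 0 := by rintro rfl; rw [zero_smul] at hl; exact hv0 hl
  have hA31 : A₃ - A₁ ≠ 0 := by intro h; rw [h, smul_zero] at hk; exact hu0 hk
  have hA42 : A₄ - A₂ ≠ 0 := by intro h; rw [h, smul_zero] at hl; exact hv0 hl
  -- pull everything back through f
  have hlinsub : ∀ (e : (ℝ × ℝ) ≃ᵃ[ℝ] (ℝ × ℝ)) (a b : ℝ × ℝ),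
      e a - e b = e.toAffineMap.linear (a - b) := by
    intro e a b
    have := AffineMap.linearMap_vsub e.toAffineMap a b
    rw [vsub_eq_sub] at this
    rw [this, AffineEquiv.coe_toAffineMap, vsub_eq_sub]
  set B1 := f.symm A₁ with hB1
  set B2 := f.symm A₂ with hB2
  set B3 := f.symm A₃ with hB3
  set B4 := f.symm A₄ with hB4
  set P' := f.symm P with hP'
  have hmap3 : ∀ x y z : ℝ × ℝ, AffineIndependent ℝ ![x, y, z] →
      AffineIndependent ℝ ![f.symm x, f.symm y, f.symm z] := by
    intro x y z h
    have h2 := h.map' f.symm.toAffineMap (by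
      rw [AffineEquiv.coe_toAffineMap]; exact f.symm.injective)
    have he : (f.symm.toAffineMap ∘ ![x, y, z]) = ![f.symm x, f.symm y, f.symm z] := by
      funext i; fin_cases i <;> rfl
    rwa [he] at h2
  have hq1B : AffineIndependent ℝ ![B1, B2, B3] := hmap3 _ _ _ hq1
  have hq2B : AffineIndependent ℝ ![B2, B3, B4] := hmap3 _ _ _ hq2
  have hq3B : AffineIndependent ℝ ![B3, B4, B1] := hmap3 _ _ _ hq3
  have hq4B : AffineIndependent ℝ ![B4, B1, B2] := hmap3 _ _ _ hq4
  have hosg : ∀ x y w : ℝ × ℝ, w ∈ openSegment ℝ x y →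
      f.symm w ∈ openSegment ℝ (f.symm x) (f.symm y) := by
    intro x y w hw
    have himg := image_openSegment (𝕜 := ℝ) f.symm.toAffineMap x y
    rw [AffineEquiv.coe_toAffineMap] at himg
    rw [← himg]
    exact ⟨w, hw, rfl⟩
  have hsg : ∀ x y w : ℝ × ℝ, w ∈ segment ℝ x y →
      f.symm w ∈ segment ℝ (f.symm x) (f.symm y) := by
    intro x y w hw
    have himg := image_segment (𝕜 := ℝ) f.symm.toAffineMap x y
    rw [AffineEquiv.coe_toAffineMap] at himg
    rw [← himg]
    exact ⟨w, hw, rfl⟩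
  have hP13' : P' ∈ openSegment ℝ B1 B3 := hosg _ _ _ hP13
  have hP24' : P' ∈ openSegment ℝ B2 B4 := hosg _ _ _ hP24
  -- the circle is inside the pulled-back quadrilateral
  have hcircB : ∀ w ∈ unitCircle, w ∈ convexHull ℝ ({B1, B2, B3, B4} : Set (ℝ × ℝ)) := by
    intro w hw
    have h1 : f w ∈ convexHull ℝ {A₁, A₂, A₃, A₄} := hf.1 ⟨w, hw, rfl⟩
    have h2 : w ∈ f.symm.toAffineMap '' (convexHull ℝ {A₁, A₂, A₃, A₄}) := by
      refine ⟨f w, h1, ?_⟩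
      rw [AffineEquiv.coe_toAffineMap]
      exact f.symm_apply_apply w
    rw [AffineMap.image_convexHull] at h2
    have h3 : f.symm.toAffineMap '' ({A₁, A₂, A₃, A₄} : Set (ℝ × ℝ)) =
        ({B1, B2, B3, B4} : Set (ℝ × ℝ)) := by
      rw [AffineEquiv.coe_toAffineMap]
      simp only [Set.image_insert_eq, Set.image_singleton]
      rfl
    rwa [h3] at h2
  -- tangent points
  obtain ⟨p1, ⟨z1, hz1c, rfl⟩, hp1⟩ := hf.2.1
  obtain ⟨p2, ⟨z2, hz2c, rfl⟩, hp2⟩ := hf.2.2.1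
  obtain ⟨p3, ⟨z3, hz3c, rfl⟩, hp3⟩ := hf.2.2.2.1
  obtain ⟨p4, ⟨z4, hz4c, rfl⟩, hp4⟩ := hf.2.2.2.2
  have hz1s : z1 ∈ segment ℝ B1 B2 := by
    have := hsg _ _ _ hp1; rwa [f.symm_apply_apply] at this
  have hz2s : z2 ∈ segment ℝ B2 B3 := by
    have := hsg _ _ _ hp2; rwa [f.symm_apply_apply] at this
  have hz3s : z3 ∈ segment ℝ B3 B4 := by
    have := hsg _ _ _ hp3; rwa [f.symm_apply_apply] at this
  have hz4s : z4 ∈ segment ℝ B4 B1 := by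
    have := hsg _ _ _ hp4; rwa [f.symm_apply_apply] at this
  -- permuted hulls
  have hset2 : ({B2, B3, B4, B1} : Set (ℝ × ℝ)) = {B1, B2, B3, B4} := by
    ext y; simp only [Set.mem_insert_iff, Set.mem_singleton_iff]; tauto
  have hset3 : ({B3, B4, B1, B2} : Set (ℝ × ℝ)) = {B1, B2, B3, B4} := by
    ext y; simp only [Set.mem_insert_iff, Set.mem_singleton_iff]; tauto
  have hset4 : ({B4, B1, B2, B3} : Set (ℝ × ℝ)) = {B1, B2, B3, B4} := by
    ext y; simp only [Set.mem_insert_iff, Set.mem_singleton_iff]; tauto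
  have hcirc2 : ∀ w ∈ unitCircle, w ∈ convexHull ℝ ({B2, B3, B4, B1} : Set (ℝ × ℝ)) := by
    intro w hw; rw [hset2]; exact hcircB w hw
  have hcirc3 : ∀ w ∈ unitCircle, w ∈ convexHull ℝ ({B3, B4, B1, B2} : Set (ℝ × ℝ)) := by
    intro w hw; rw [hset3]; exact hcircB w hw
  have hcirc4 : ∀ w ∈ unitCircle, w ∈ convexHull ℝ ({B4, B1, B2, B3} : Set (ℝ × ℝ)) := by
    intro w hw; rw [hset4]; exact hcircB w hw
  -- tangency equations
  obtain ⟨h11, h12⟩ := tangency hz1c hz1s hcircB hq1B hP13' hP24'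
  obtain ⟨h22, h23⟩ := tangency hz2c hz2s hcirc2 hq2B hP24'
    ((openSegment_symm ℝ B1 B3) ▸ hP13')
  obtain ⟨h33, h34⟩ := tangency hz3c hz3s hcirc3 hq3B
    ((openSegment_symm ℝ B1 B3) ▸ hP13') ((openSegment_symm ℝ B2 B4) ▸ hP24')
  obtain ⟨h44, h41⟩ := tangency hz4c hz4s hcirc4 hq4B
    ((openSegment_symm ℝ B2 B4) ▸ hP24') hP13'
  -- nondegeneracy of tangent points
  have hzne : ∀ z : ℝ × ℝ, z ∈ unitCircle → z ≠ 0 := by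
    intro z hz h0
    rw [h0] at hz
    have : (0:ℝ) ^ 2 + (0:ℝ) ^ 2 = 1 := hz
    norm_num at this
  have hne41 : z4 ≠ z1 := by
    intro h
    exact cross_ne_of_affineIndependent hq4B
      (cross_eq_zero_of_dot (hzne z4 hz4c) h44 h41 (h ▸ h12))
  have hne12 : z1 ≠ z2 := by
    intro h
    exact cross_ne_of_affineIndependent hq1B
      (cross_eq_zero_of_dot (hzne z1 hz1c) h11 h12 (h.symm ▸ h23))
  have hne23 : z2 ≠ z3 := by
    intro h
    exact cross_ne_of_affineIndependent hq2B
      (cross_eq_zero_of_dot (hzne z2 hz2c) h22 h23 (h.symm ▸ h34))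
  have hne34 : z3 ≠ z4 := by
    intro h
    exact cross_ne_of_affineIndependent hq3B
      (cross_eq_zero_of_dot (hzne z3 hz3c) h33 h34 (h.symm ▸ h41))
  have hsum : ∀ za zb B : ℝ × ℝ, za.1 * B.1 + za.2 * B.2 = 1 →
      zb.1 * B.1 + zb.2 * B.2 = 1 → za + zb ≠ 0 := by
    intro za zb B hA hB h
    have hzz : za = -zb := eq_neg_of_add_eq_zero_left h
    have e1 : za.1 = -zb.1 := by rw [hzz]; rfl
    have e2 : za.2 = -zb.2 := by rw [hzz]; rfl
    rw [e1, e2] at hA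
    linarith
  have hs1 : z4 + z1 ≠ 0 := hsum z4 z1 B1 h41 h11
  have hs2 : z1 + z2 ≠ 0 := hsum z1 z2 B2 h12 h22
  have hs3 : z2 + z3 ≠ 0 := hsum z2 z3 B3 h23 h33
  have hs4 : z3 + z4 ≠ 0 := hsum z3 z4 B4 h34 h44
  -- perpendicularity of the pulled-back diagonals
  have hB3ne : B3 - B1 ≠ 0 := by
    intro h
    exact hA31 (by
      have : B3 = B1 := by rwa [sub_eq_zero] at h
      have h2 : A₃ = A₁ := by
        have := congrArg f this
        rwa [hB3, hB1, f.apply_symm_apply, f.apply_symm_apply] at this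
      rw [h2, sub_self])
  set d : ℝ × ℝ := B3 - B1 with hd
  have hd1 : d.1 = B3.1 - B1.1 := rfl
  have hd2 : d.2 = B3.2 - B1.2 := rfl
  have hn0 : (0:ℝ) < Real.sqrt (d.1 ^ 2 + d.2 ^ 2) := Real.sqrt_pos.mpr (sumsq_pos hB3ne)
  set n : ℝ := Real.sqrt (d.1 ^ 2 + d.2 ^ 2) with hndef
  have hn2 : n ^ 2 = d.1 ^ 2 + d.2 ^ 2 := Real.sq_sqrt (by positivity)
  have hnne : n ≠ 0 := ne_of_gt hn0
  set s3 : ℝ := Real.sqrt 3 with hs3def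
  have hs3sq : s3 ^ 2 = 3 := Real.sq_sqrt (by norm_num)
  have hs3pos : 0 < s3 := Real.sqrt_pos.mpr (by norm_num)
  set x : ℝ × ℝ := ((s3 * d.1 - d.2) / (2 * n), (s3 * d.2 + d.1) / (2 * n)) with hxdef
  set y : ℝ × ℝ := ((-(s3 * d.1) - d.2) / (2 * n), (-(s3 * d.2) + d.1) / (2 * n)) with hydef
  have hxcirc : x ∈ unitCircle := by
    show ((s3 * d.1 - d.2) / (2 * n)) ^ 2 + ((s3 * d.2 + d.1) / (2 * n)) ^ 2 = 1
    field_simp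
    linear_combination (d.1 ^ 2 + d.2 ^ 2) * hs3sq - 4 * hn2
  have hycirc : y ∈ unitCircle := by
    show ((-(s3 * d.1) - d.2) / (2 * n)) ^ 2 + ((-(s3 * d.2) + d.1) / (2 * n)) ^ 2 = 1
    field_simp
    linear_combination (d.1 ^ 2 + d.2 ^ 2) * hs3sq - 4 * hn2
  have hxy : x - y = (s3 / n) • d := by
    apply Prod.ext
    · show x.1 - y.1 = (s3 / n) * d.1
      rw [hxdef, hydef]
      field_simp
      ring
    · show x.2 - y.2 = (s3 / n) * d.2
      rw [hxdef, hydef]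
      field_simp
      ring
  have hfd : f.toAffineMap.linear d = A₃ - A₁ := by
    rw [hd, ← hlinsub, hB3, hB1, f.apply_symm_apply, f.apply_symm_apply]
  have hfxy : f x - f y = (s3 / n) • (A₃ - A₁) := by
    rw [hlinsub, hxy, map_smul, hfd]
  have hxney : f x ≠ f y := by
    intro h
    have h2 : x - y = 0 := by
      have := f.injective h
      rw [this, sub_self]
    rw [hxy] at h2
    rcases smul_eq_zero.mp h2 with h3 | h3
    · exact absurd h3 (div_ne_zero (ne_of_gt hs3pos) hnne)
    · exact hB3ne h3
  have hchordpar : ∃ t : ℝ, f x - f y = t • u := by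
    refine ⟨s3 / (n * k), ?_⟩
    have hsc : s3 / (n * k) * k = s3 / n := by field_simp
    rw [hfxy, hk, smul_smul, hsc]
  obtain ⟨τ, hτ⟩ := hchord (f x) (f y) ⟨x, hxcirc, rfl⟩ ⟨y, hycirc, rfl⟩ hxney hchordpar
  have hmid : midpoint ℝ x y = (τ * l) • (B4 - B2) := by
    have h1 : f (midpoint ℝ x y) = f 0 + τ • v := by
      rw [AffineEquiv.map_midpoint]; exact hτ
    have h2 : f.symm (f (midpoint ℝ x y)) - f.symm (f 0) =
        f.symm.toAffineMap.linear (f (midpoint ℝ x y) - f 0) := hlinsub f.symm _ _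
    rw [f.symm_apply_apply, f.symm_apply_apply, h1] at h2
    have h3 : f 0 + τ • v - f 0 = τ • v := by abel
    rw [h3] at h2
    have h4 : f.symm.toAffineMap.linear (τ • v) = τ • (l • (B4 - B2)) := by
      rw [map_smul]
      congr 1
      rw [hl, map_smul]
      congr 1
      rw [← hlinsub, hB4, hB2]
    rw [h4] at h2
    rw [smul_smul] at h2
    have h5 : midpoint ℝ x y - 0 = midpoint ℝ x y := by abel
    rw [h5] at h2
    exact h2
  have hmco := midpoint_coord x y
  have hco1 : -d.2 / (2 * n) = (τ * l) * (B4.1 - B2.1) := by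
    have h1 := congrArg Prod.fst hmid
    rw [hmco] at h1
    have h1' : (x.1 + y.1) / 2 = (τ * l) * (B4.1 - B2.1) := by
      simpa [Prod.smul_fst, smul_eq_mul, Prod.fst_sub] using h1
    rw [← h1']
    show -d.2 / (2 * n) = (((s3 * d.1 - d.2) / (2 * n)) + ((-(s3 * d.1) - d.2) / (2 * n))) / 2
    field_simp
    ring
  have hco2 : d.1 / (2 * n) = (τ * l) * (B4.2 - B2.2) := by
    have h1 := congrArg Prod.snd hmid
    rw [hmco] at h1
    have h1' : (x.2 + y.2) / 2 = (τ * l) * (B4.2 - B2.2) := by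
      simpa [Prod.smul_snd, smul_eq_mul, Prod.snd_sub] using h1
    rw [← h1']
    show d.1 / (2 * n) = (((s3 * d.2 + d.1) / (2 * n)) + ((-(s3 * d.2) + d.1) / (2 * n))) / 2
    field_simp
    ring
  have hr0 : τ * l ≠ 0 := by
    intro h
    rw [h, zero_mul] at hco1 hco2
    apply hB3ne
    have h2n : (2 : ℝ) * n ≠ 0 := by positivity
    have hd1z : d.1 = 0 := by
      rcases div_eq_zero_iff.mp hco2 with h' | h'
      · exact h'
      · exact absurd h' h2n
    have hd2z : d.2 = 0 := by
      rcases div_eq_zero_iff.mp hco1 with h' | h'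
      · linarith [neg_eq_zero.mp h']
      · exact absurd h' h2n
    exact Prod.ext hd1z hd2z
  have hperp : (B3.1 - B1.1) * (B4.1 - B2.1) + (B3.2 - B1.2) * (B4.2 - B2.2) = 0 := by
    have hmul : (τ * l) * ((B3.1 - B1.1) * (B4.1 - B2.1) + (B3.2 - B1.2) * (B4.2 - B2.2)) = 0 := by
      rw [← hd1, ← hd2]
      linear_combination (-d.1) * hco1 - d.2 * hco2
    exact (mul_eq_zero.mp hmul).resolve_left hr0
  -- the key algebraic step
  have hrev : ∀ a b c : ℝ × ℝ, AffineIndependent ℝ ![a, b, c] →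
      AffineIndependent ℝ ![c, b, a] := by
    intro a b c h
    have h2 := h.comp_embedding (⟨![2, 1, 0], by decide⟩ : Fin 3 ↪ Fin 3)
    have he : (![a, b, c] ∘ (⟨![2, 1, 0], by decide⟩ : Fin 3 ↪ Fin 3)) = ![c, b, a] := by
      funext i; fin_cases i <;> rfl
    rwa [he] at h2
  have hmdqB : P' = midpoint ℝ B1 B3 ∨ P' = midpoint ℝ B2 B4 := by
    rcases keyAlgebra hz1c hz2c hz3c hz4c h11 h12 h22 h23 h33 h34 h44 h41
      hne41 hne12 hne23 hne34 hs1 hs2 hs3 hs4 hperp with hcr | hcr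
    · exact Or.inl (diag_midpoint hP13' hP24' hq4B hcr)
    · exact Or.inr (diag_midpoint hP24' hP13' (hrev _ _ _ hq1B) hcr)
  apply hmdq
  refine ⟨P, hP13, hP24, ?_⟩
  rcases hmdqB with h | h
  · left
    have := congrArg f h
    rw [hP', f.apply_symm_apply, AffineEquiv.map_midpoint, hB1, hB3,
      f.apply_symm_apply, f.apply_symm_apply] at this
    exact this
  · right
    have := congrArg f h
    rw [hP', f.apply_symm_apply, AffineEquiv.map_midpoint, hB2, hB4,
      f.apply_symm_apply, f.apply_symm_apply] at this
    exact this
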